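/- Let V be an n-dimensional vector space over a field R, n ≥ 2, and G ≤ PGL(V) isomorphic to S_m. Suppose 𝒳 is a G-orbit in P(V) with |𝒳| = m on which G acts faithfully, and no proper nonzero subspace of V is G-invariant. Then 𝒳 is an independent subset of size n, or an n-simplex, or char R = 3 and 𝒳 is a harmonic subset; moreover in the non-independent cases G equals the group G(𝒳) of extensions of permutations of 𝒳. -/

import Mathlib

namespace S19
open Submodule

variable {K V : Type*} [Field K] [AddCommGroup V] [Module K V]

lemma line_span [FiniteDimensional K V] {P : Submodule K V} (hP : Module.finrank K P = 1)
    {x : V} (hx : x ∈ P) (h0 : x ≠ 0) : span K {x} = P := by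
  refine Submodule.eq_of_le_of_finrank_eq ?_ ?_
  · simpa using hx
  · rw [finrank_span_singleton h0, hP]

lemma exists_rep [FiniteDimensional K V] {P : Submodule K V} (hP : Module.finrank K P = 1) :
    ∃ x, x ∈ P ∧ x ≠ 0 := by
  have : P ≠ ⊥ := by
    intro h
    rw [h] at hP
    simp at hP
  obtain ⟨x, hx, h0⟩ := Submodule.exists_mem_ne_zero_of_ne_bot this
  exact ⟨x, hx, h0⟩

lemma frame_fix {ι' : Type*} [Fintype ι'] [Nonempty ι'] (b : Module.Basis ι' K V) (w : V ≃ₗ[K] V)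
    (hb : ∀ i, ∃ c : K, w (b i) = c • b i) (d : ι' → K) (hd : ∀ i, d i ≠ 0)
    (hw : ∃ c : K, w (∑ i, d i • b i) = c • ∑ i, d i • b i) :
    ∀ P : Submodule K V, Submodule.map (w : V →ₗ[K] V) P = P := by
  choose c hc using hb
  obtain ⟨c₀, hc₀⟩ := hw
  have hceq : ∀ i, c i = c₀ := by
    intro i
    have h1 : w (∑ j, d j • b j) = ∑ j, (d j * c j) • b j := by
      rw [map_sum]
      refine Finset.sum_congr rfl fun j _ => ?_
      rw [map_smul, hc, smul_smul]
    have h2 : (c₀ • ∑ j, d j • b j) = ∑ j, (c₀ * d j) • b j := by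
      rw [Finset.smul_sum]
      refine Finset.sum_congr rfl fun j _ => ?_
      rw [smul_smul]
    have h3 : ∑ j, (d j * c j - c₀ * d j) • b j = 0 := by
      simp only [sub_smul, Finset.sum_sub_distrib]
      rw [← h1, ← h2, hc₀, sub_self]
    have h4 := Fintype.linearIndependent_iff.1 b.linearIndependent _ h3 i
    have h5 : d i * c i = d i * c₀ := by
      have := sub_eq_zero.1 h4
      rw [this, mul_comm]
    exact mul_left_cancel₀ (hd i) h5
  have hsc : ∀ x, w x = c₀ • x := by
    have heq : (w : V →ₗ[K] V) = c₀ • LinearMap.id := by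
      refine b.ext fun i => ?_
      simp [hc i, hceq i]
    intro x
    have := congrArg (fun f : V →ₗ[K] V => f x) heq
    simpa using this
  have hc₀0 : c₀ ≠ 0 := by
    intro h
    have i : ι' := Classical.arbitrary ι'
    have h1 : b i = (0 : V) := by
      apply w.injective
      rw [hsc (b i), h, zero_smul, map_zero]
    exact b.ne_zero i h1
  intro P
  ext y
  simp only [Submodule.mem_map]
  constructor
  · rintro ⟨x, hx, rfl⟩
    show w x ∈ P
    rw [hsc]
    exact P.smul_mem _ hx
  · intro hy
    exact ⟨c₀⁻¹ • y, P.smul_mem _ hy,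
      by show w _ = y; rw [hsc, smul_smul, mul_inv_cancel₀ hc₀0, one_smul]⟩

lemma perm_extend {ι : Type*} [Fintype ι] [DecidableEq ι] {s t : Finset ι}
    (h : s.card = t.card) : ∃ σ : Equiv.Perm ι, ∀ i, i ∈ s ↔ σ i ∈ t := by
  have hcompl : Fintype.card {a // ¬ a ∈ s} = Fintype.card {a // ¬ a ∈ t} := by
    rw [Fintype.card_subtype_compl, Fintype.card_subtype_compl, Fintype.card_coe,
      Fintype.card_coe, h]
  have e1 : {a // a ∈ s} ≃ {a // a ∈ t} := Finset.equivOfCardEq h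
  have e2 : {a // ¬ a ∈ s} ≃ {a // ¬ a ∈ t} := Fintype.equivOfCardEq hcompl
  refine ⟨((Equiv.sumCompl (· ∈ s)).symm.trans ((e1.sumCongr e2).trans
    (Equiv.sumCompl (· ∈ t)))), fun i => ?_⟩
  by_cases hi : i ∈ s
  · simp only [Equiv.trans_apply, Equiv.sumCompl_symm_apply_of_pos hi, Equiv.sumCongr_apply,
      Sum.map_inl, Equiv.sumCompl_apply_inl]
    exact ⟨fun _ => (e1 ⟨i, hi⟩).2, fun _ => hi⟩
  · simp only [Equiv.trans_apply, Equiv.sumCompl_symm_apply_of_neg hi, Equiv.sumCongr_apply,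
      Sum.map_inr, Equiv.sumCompl_apply_inr]
    exact ⟨fun h' => absurd h' hi, fun h' => absurd h' (e2 ⟨i, hi⟩).2⟩

lemma indep_of_small {ι : Type*} [Fintype ι] (v : ι → V) (k : ℕ)
    (hmin : ∀ l : ι → K, ∑ i, l i • v i = 0 → l ≠ 0 →
      ∃ t : Finset ι, k ≤ t.card ∧ ∀ i ∈ t, l i ≠ 0)
    {A : Type*} [Fintype A] (f : A → ι) (hf : Function.Injective f)
    (hA : Fintype.card A < k) : LinearIndependent K (v ∘ f) := by
  classical
  rw [Fintype.linearIndependent_iff]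
  intro g hg
  set l : ι → K := fun j => if h : ∃ a, f a = j then g h.choose else 0 with hl
  have hlf : ∀ a, l (f a) = g a := by
    intro a
    have he : ∃ a', f a' = f a := ⟨a, rfl⟩
    simp only [hl, dif_pos he]
    congr 1
    exact hf he.choose_spec
  have hsupp : ∀ j, l j ≠ 0 → j ∈ Finset.univ.image f := by
    intro j hj
    by_contra hjim
    have : ¬ ∃ a, f a = j := by
      intro ⟨a, ha⟩
      exact hjim (Finset.mem_image.2 ⟨a, Finset.mem_univ a, ha⟩)
    simp [hl, dif_neg this] at hj
  have hrel : ∑ i, l i • v i = 0 := by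
    rw [← Finset.sum_subset (Finset.subset_univ (Finset.univ.image f))
      (fun x _ hx => by rw [of_not_not (fun h => hx (hsupp x h))]; simp)]
    rw [Finset.sum_image (fun a _ b _ hab => hf hab)]
    simpa [hlf] using hg
  by_cases h : l = 0
  · intro a
    rw [← hlf a, h]
    rfl
  · exfalso
    obtain ⟨t, hkt, ht⟩ := hmin l hrel h
    have hsub : t ⊆ Finset.univ.image f := fun j hj => hsupp j (ht j hj)
    have h1 : t.card ≤ Fintype.card A := by
      calc t.card ≤ (Finset.univ.image f).card := Finset.card_le_card hsub
        _ ≤ Finset.univ.card := Finset.card_image_le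
        _ = Fintype.card A := rfl
    omega

end S19

/-- The projective space of `V`: the type of lines (1-dimensional subspaces). -/
abbrev ProjLine (K V : Type*) [DivisionRing K] [AddCommGroup V] [Module K V] : Type _ :=
  {P : Submodule K V // Module.finrank K P = 1}

/-- A finite set of lines is *independent* if some choice of nonzero representative
vectors is linearly independent. -/
def IndepLines (K : Type*) {V : Type*} [DivisionRing K] [AddCommGroup V] [Module K V]
    (𝒳 : Set (Submodule K V)) : Prop :=
  ∃ x : 𝒳 → V, (∀ P : 𝒳, x P ∈ (P : Submodule K V) ∧ x P ≠ 0) ∧ LinearIndependent K x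

/-- An `(m+1)`-element subset of `P(V)` is an *`m`-simplex* if it is not independent
but every `m`-element subset of it is independent. -/
def IsSimplex (K : Type*) {V : Type*} [DivisionRing K] [AddCommGroup V] [Module K V]
    (m : ℕ) (𝒳 : Set (Submodule K V)) : Prop :=
  𝒳.Finite ∧ 𝒳.ncard = m + 1 ∧ (∀ P ∈ 𝒳, Module.finrank K P = 1) ∧
    ¬ IndepLines K 𝒳 ∧ ∀ 𝒴 ⊆ 𝒳, 𝒴.ncard = m → IndepLines K 𝒴

/-- A subset of `P(V)` is *harmonic* if it is `{⟨x⟩, ⟨y⟩, ⟨x+y⟩, ⟨x−y⟩}` for some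
linearly independent `x, y`. -/
def Harmonic (K : Type*) {V : Type*} [DivisionRing K] [AddCommGroup V] [Module K V]
    (𝒳 : Set (Submodule K V)) : Prop :=
  ∃ x y : V, LinearIndependent K ![x, y] ∧
    𝒳 = {Submodule.span K {x}, Submodule.span K {y},
      Submodule.span K {x + y}, Submodule.span K {x - y}}

/-- A permutation of the projective space lies in `PGL(V)` if it is induced by a
linear automorphism of `V`. -/
def IsProjectiveTransformation {K V : Type*} [DivisionRing K] [AddCommGroup V]
    [Module K V] (g : Equiv.Perm (ProjLine K V)) : Prop :=
  ∃ u : V ≃ₗ[K] V, ∀ P : ProjLine K V,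
    ((g P : ProjLine K V) : Submodule K V) = Submodule.map (u : V →ₗ[K] V) (P : Submodule K V)

open Submodule

/-- Corollary 2: Let `G ≤ PGL(V)` (realized as a subgroup of the
permutations of `P(V)` consisting of projective transformations) be isomorphic to
`S m`, let `𝒳` be a `G`-orbit in `P(V)` of cardinality `m` on which `G` acts
faithfully, and suppose no proper nonzero subspace of `V` is `G`-invariant.  Then
`𝒳` is a maximal independent subset (of size `n = dim V`), or an `n`-simplex, or
`char K = 3` and `𝒳` is harmonic; moreover if `𝒳` is not independent then
`G = G(𝒳)`, the set of projective transformations stabilizing `𝒳`. -/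
theorem stmt19 {K V : Type*} [Field K] [AddCommGroup V] [Module K V]
    [FiniteDimensional K V] {n m : ℕ} (hn : Module.finrank K V = n) (h2 : 2 ≤ n)
    (G : Subgroup (Equiv.Perm (ProjLine K V)))
    (hPGL : ∀ g ∈ G, IsProjectiveTransformation g)
    (hG : Nonempty (G ≃* Equiv.Perm (Fin m)))
    (P₀ : ProjLine K V) (𝒳 : Set (ProjLine K V))
    (h𝒳 : 𝒳 = {Q : ProjLine K V | ∃ g ∈ G, g P₀ = Q})
    (hcard : 𝒳.ncard = m)
    (hfaith : ∀ g ∈ G, (∀ P ∈ 𝒳, g P = P) → g = 1)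
    (hinv : ∀ W : Submodule K V,
      (∀ g ∈ G, ∀ P : ProjLine K V, (P : Submodule K V) ≤ W →
        ((g P : ProjLine K V) : Submodule K V) ≤ W) → W = ⊥ ∨ W = ⊤) :
    ((IndepLines K (Subtype.val '' 𝒳) ∧ 𝒳.ncard = n) ∨
      IsSimplex K n (Subtype.val '' 𝒳) ∨
      (ringChar K = 3 ∧ Harmonic K (Subtype.val '' 𝒳))) ∧
    (¬ IndepLines K (Subtype.val '' 𝒳) →
      ∀ g : Equiv.Perm (ProjLine K V),
        g ∈ G ↔ IsProjectiveTransformation g ∧ ∀ P : ProjLine K V, P ∈ 𝒳 ↔ g P ∈ 𝒳) := by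
  classical
  obtain ⟨e⟩ := hG
  haveI : Fintype G := Fintype.ofEquiv _ e.toEquiv.symm
  have hGcard : Fintype.card G = Nat.factorial m := by
    rw [Fintype.card_congr e.toEquiv, Fintype.card_perm, Fintype.card_fin]
  have hP₀ : P₀ ∈ 𝒳 := by rw [h𝒳]; exact ⟨1, G.one_mem, rfl⟩
  have hfin : 𝒳.Finite := by
    apply Set.Finite.subset (Set.finite_range (fun g : G => (g : Equiv.Perm (ProjLine K V)) P₀))
    intro Q hQ
    rw [h𝒳] at hQ
    obtain ⟨g, hg, hgQ⟩ := hQ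
    exact ⟨⟨g, hg⟩, hgQ⟩
  haveI : Fintype ↥𝒳 := hfin.fintype
  haveI : Nonempty ↥𝒳 := ⟨⟨P₀, hP₀⟩⟩
  have hcardι : Fintype.card ↥𝒳 = m := by
    rw [← Nat.card_eq_fintype_card, Nat.card_coe_set_eq, hcard]
  have hmem : ∀ g ∈ G, ∀ P ∈ 𝒳, g P ∈ 𝒳 := by
    intro g hg P hP
    rw [h𝒳] at hP ⊢
    obtain ⟨g', hg', rfl⟩ := hP
    exact ⟨g * g', G.mul_mem hg hg', rfl⟩
  -- the action of `G` on `𝒳` as permutations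
  have hρex : ∀ g : G, ∀ i : ↥𝒳, (g : Equiv.Perm (ProjLine K V)) i.1 ∈ 𝒳 :=
    fun g i => hmem g g.2 i.1 i.2
  let ρ : G → Equiv.Perm ↥𝒳 := fun g =>
    { toFun := fun i => ⟨(g : Equiv.Perm (ProjLine K V)) i.1, hρex g i⟩
      invFun := fun i => ⟨(g⁻¹ : G).1 i.1, hρex g⁻¹ i⟩
      left_inv := by
        intro i
        apply Subtype.ext
        exact Equiv.symm_apply_apply (g : Equiv.Perm (ProjLine K V)) _
      right_inv := by
        intro i
        apply Subtype.ext
        exact Equiv.apply_symm_apply (g : Equiv.Perm (ProjLine K V)) _ }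
  have hρapp : ∀ (g : G) (i : ↥𝒳), (ρ g i).1 = (g : Equiv.Perm (ProjLine K V)) i.1 :=
    fun g i => rfl
  have hρsurj : Function.Surjective ρ := by
    have hinj : Function.Injective ρ := by
      intro g g' hgg
      have h1 : ∀ P ∈ 𝒳, ((g'⁻¹ * g : G) : Equiv.Perm (ProjLine K V)) P = P := by
        intro P hP
        have h2 : (ρ g ⟨P, hP⟩).1 = (ρ g' ⟨P, hP⟩).1 := by rw [hgg]
        rw [hρapp, hρapp] at h2
        show ((g' : Equiv.Perm (ProjLine K V))⁻¹) ((g : Equiv.Perm (ProjLine K V)) P) = P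
        rw [h2]
        exact Equiv.symm_apply_apply (g' : Equiv.Perm (ProjLine K V)) _
      have h3 := hfaith _ (g'⁻¹ * g : G).2 h1
      have h4 : (g'⁻¹ * g : G) = 1 := Subtype.ext h3
      exact (inv_mul_eq_one.1 h4).symm
    have hcards : Fintype.card G = Fintype.card (Equiv.Perm ↥𝒳) := by
      rw [hGcard, Fintype.card_perm, hcardι]
    exact ((Fintype.bijective_iff_injective_and_card ρ).2 ⟨hinj, hcards⟩).2
  -- representatives
  choose v hv hv0 using fun i : ↥𝒳 => S19.exists_rep i.1.2
  have hvspan : ∀ i : ↥𝒳, span K {v i} = i.1.1 := fun i => S19.line_span i.1.2 (hv i) (hv0 i)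
  have hvne : ∀ i j : ↥𝒳, v i ∈ span K {v j} → i = j := by
    intro i j hij
    have h1 : i.1.1 ≤ j.1.1 := by
      rw [← hvspan i, ← hvspan j]
      exact (span_le.2 (by simpa using hij))
    have h2 : i.1.1 = j.1.1 := Submodule.eq_of_le_of_finrank_eq h1 (by rw [i.1.2, j.1.2])
    exact Subtype.ext (Subtype.ext h2)
  have hspan : span K (Set.range v) = ⊤ := by
    have hWinv : ∀ g ∈ G, ∀ P : ProjLine K V, (P : Submodule K V) ≤ span K (Set.range v) →
        ((g P : ProjLine K V) : Submodule K V) ≤ span K (Set.range v) := by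
      intro g hg P hP
      obtain ⟨u, hu⟩ := hPGL g hg
      rw [hu]
      refine le_trans (Submodule.map_mono hP) ?_
      rw [Submodule.map_span]
      apply span_le.2
      rintro _ ⟨_, ⟨i, rfl⟩, rfl⟩
      have h1 : u (v i) ∈ ((g i.1 : ProjLine K V) : Submodule K V) := by
        rw [hu i.1]
        exact Submodule.mem_map_of_mem (hv i)
      have h2 : ((g i.1 : ProjLine K V) : Submodule K V)
          = span K {v ⟨g i.1, hmem g hg i.1 i.2⟩} := (hvspan ⟨g i.1, hmem g hg i.1 i.2⟩).symm
      rw [h2] at h1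
      exact span_mono (Set.singleton_subset_iff.2 (Set.mem_range_self _)) h1
    rcases hinv (span K (Set.range v)) hWinv with h | h
    · exfalso
      have h1 : v ⟨P₀, hP₀⟩ ∈ span K (Set.range v) :=
        subset_span (Set.mem_range_self _)
      rw [h] at h1
      exact hv0 _ (by simpa using h1)
    · exact h
  -- realize any permutation of `𝒳` by an element of `G` with a linear lift
  have key : ∀ σ : Equiv.Perm ↥𝒳, ∃ (g : G) (u : V ≃ₗ[K] V) (c : ↥𝒳 → K),
      (∀ P : ProjLine K V, ((g : Equiv.Perm (ProjLine K V)) P).1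
          = Submodule.map (u : V →ₗ[K] V) P.1) ∧
      (∀ i : ↥𝒳, (g : Equiv.Perm (ProjLine K V)) i.1 = (σ i).1) ∧
      (∀ i, c i ≠ 0) ∧ (∀ i, u (v i) = c i • v (σ i)) := by
    intro σ
    obtain ⟨g, hgρ⟩ := hρsurj σ
    obtain ⟨u, hu⟩ := hPGL g g.2
    have hgσ : ∀ i : ↥𝒳, (g : Equiv.Perm (ProjLine K V)) i.1 = (σ i).1 := by
      intro i
      rw [← hgρ]
      rfl
    have hc : ∀ i : ↥𝒳, ∃ c : K, c ≠ 0 ∧ u (v i) = c • v (σ i) := by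
      intro i
      have h1 : u (v i) ∈ ((σ i).1 : Submodule K V) := by
        rw [← hgσ i, hu i.1]
        exact Submodule.mem_map_of_mem (hv i)
      rw [← hvspan (σ i), Submodule.mem_span_singleton] at h1
      obtain ⟨c, hc⟩ := h1
      refine ⟨c, ?_, hc.symm⟩
      intro h0
      rw [h0, zero_smul] at hc
      exact hv0 i (u.injective (by rw [← hc, map_zero]))
    choose c hc0 hcv using hc
    exact ⟨g, u, c, hu, hgσ, hc0, hcv⟩
  -- Part 2 follows from the existence of a "frame" inside `𝒳`
  have part2of : (∃ (s₀ : Finset ↥𝒳) (i₀ : ↥𝒳) (d : ↥s₀ → K), i₀ ∉ s₀ ∧ s₀.Nonempty ∧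
      LinearIndependent K (fun i : ↥s₀ => v i.1) ∧ (⊤ : Submodule K V) ≤ span K (Set.range (fun i : ↥s₀ => v i.1)) ∧
      (∀ i, d i ≠ 0) ∧ v i₀ = ∑ i : ↥s₀, d i • v i.1) →
      ∀ g : Equiv.Perm (ProjLine K V),
        g ∈ G ↔ IsProjectiveTransformation g ∧ ∀ P : ProjLine K V, P ∈ 𝒳 ↔ g P ∈ 𝒳 := by
    rintro ⟨s₀, i₀, d, hi₀, hne, hind, hsp, hd0, hsum⟩ g
    haveI : Nonempty ↥s₀ := Finset.nonempty_coe_sort.2 hne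
    constructor
    · intro hg
      refine ⟨hPGL g hg, fun P => ⟨fun h => hmem g hg P h, fun h => ?_⟩⟩
      have h1 := hmem _ (G.inv_mem hg) _ h
      rwa [show g⁻¹ (g P) = P from Equiv.symm_apply_apply g P] at h1
    · rintro ⟨⟨u, hu⟩, hpres⟩
      have hτex : ∀ i : ↥𝒳, g i.1 ∈ 𝒳 := fun i => (hpres i.1).1 i.2
      have hτex' : ∀ i : ↥𝒳, g⁻¹ i.1 ∈ 𝒳 := by
        intro i
        apply (hpres (g⁻¹ i.1)).2
        rw [show g (g⁻¹ i.1) = i.1 from Equiv.apply_symm_apply g i.1]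
        exact i.2
      set τ : Equiv.Perm ↥𝒳 :=
        { toFun := fun i => ⟨g i.1, hτex i⟩
          invFun := fun i => ⟨g⁻¹ i.1, hτex' i⟩
          left_inv := fun i => Subtype.ext (Equiv.symm_apply_apply g _)
          right_inv := fun i => Subtype.ext (Equiv.apply_symm_apply g _) } with hτdef
      obtain ⟨g', u', c, hu', hg'σ, hc0, hcv⟩ := key τ
      set w : V ≃ₗ[K] V := u.trans u'.symm with hwdef
      have hwv : ∀ i : ↥𝒳, ∃ c'' : K, w (v i) = c'' • v i := by
        intro i
        have h1 : u (v i) ∈ ((τ i).1 : Submodule K V) := by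
          have h2 : ((g i.1 : ProjLine K V) : Submodule K V)
              = Submodule.map (u : V →ₗ[K] V) i.1.1 := hu i.1
          have h3 : (τ i).1 = g i.1 := rfl
          rw [h3, h2]
          exact Submodule.mem_map_of_mem (hv i)
        rw [← hvspan (τ i), Submodule.mem_span_singleton] at h1
        obtain ⟨a, ha⟩ := h1
        refine ⟨a * (c i)⁻¹, ?_⟩
        have h4 : u'.symm (v (τ i)) = (c i)⁻¹ • v i := by
          apply u'.injective
          rw [u'.apply_symm_apply, map_smul, hcv i, smul_smul, inv_mul_cancel₀ (hc0 i), one_smul]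
        show u'.symm (u (v i)) = _
        rw [← ha, map_smul, h4, smul_smul]
      let hbv : Module.Basis ↥s₀ K V := Module.Basis.mk hind hsp
      have hbvi : ∀ i : ↥s₀, hbv i = v i.1 := fun i => Module.Basis.mk_apply hind hsp i
      have hbeq : ∑ i : ↥s₀, d i • hbv i = v i₀ := by
        rw [hsum]
        exact Finset.sum_congr rfl fun i _ => by rw [hbvi]
      have hfix := S19.frame_fix hbv w (fun i => by rw [hbvi]; exact hwv i.1) d hd0
        (by rw [hbeq]; exact hwv i₀)
      have hmapeq : ∀ X : Submodule K V,
          Submodule.map (u : V →ₗ[K] V) X = Submodule.map (u' : V →ₗ[K] V) X := by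
        intro X
        have h1 : Submodule.map (w : V →ₗ[K] V) X = X := hfix X
        have h2 : (w : V →ₗ[K] V) = (u'.symm : V →ₗ[K] V).comp (u : V →ₗ[K] V) :=
          LinearMap.ext fun x => rfl
        rw [h2, Submodule.map_comp] at h1
        have h3 := congrArg (Submodule.map (u' : V →ₗ[K] V)) h1
        have h4 : (u'.toLinearMap).comp (u'.symm.toLinearMap) = LinearMap.id :=
          LinearMap.ext fun x => u'.apply_symm_apply x
        rwa [← Submodule.map_comp, h4, Submodule.map_id] at h3
      have hgeq : g = (g' : Equiv.Perm (ProjLine K V)) := by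
        apply Equiv.ext
        intro P
        apply Subtype.ext
        rw [show ((g P : ProjLine K V) : Submodule K V)
          = Submodule.map (u : V →ₗ[K] V) P.1 from hu P, hmapeq, ← hu' P]
      rw [hgeq]
      exact g'.2
  by_cases hindep : LinearIndependent K v
  · -- 𝒳 independent of size n
    have hIL : IndepLines K (Subtype.val '' 𝒳) := by
      have hi : ∀ Q : ↥(Subtype.val '' 𝒳), ∃ i : ↥𝒳, i.1.1 = Q.1 := by
        rintro ⟨Q, hQ⟩
        obtain ⟨P, hP, hPQ⟩ := hQ
        exact ⟨⟨P, hP⟩, hPQ⟩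
      choose iof hiof using hi
      have hiinj : Function.Injective iof := by
        intro Q Q' hQQ
        apply Subtype.ext
        rw [← hiof Q, ← hiof Q', hQQ]
      refine ⟨fun Q => v (iof Q), fun Q => ⟨?_, hv0 _⟩, hindep.comp iof hiinj⟩
      rw [← hiof Q]
      exact hv (iof Q)
    have hmn : m = n := by
      have hb : Module.Basis ↥𝒳 K V := Module.Basis.mk hindep (by rw [hspan])
      rw [← hcardι, ← hn, Module.finrank_eq_card_basis hb]
    exact ⟨Or.inl ⟨hIL, by rw [hcard, hmn]⟩, fun hni => absurd hIL hni⟩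
  · -- 𝒳 not independent
    obtain ⟨l₁, hl₁rel, i₁, hl₁i⟩ := Fintype.not_linearIndependent_iff.1 hindep
    set supp : (↥𝒳 → K) → Finset ↥𝒳 := fun l => Finset.univ.filter fun i => l i ≠ 0 with hsuppdef
    have hex : ∃ c : ℕ, ∃ l : ↥𝒳 → K, (∑ i, l i • v i = 0) ∧ l ≠ 0 ∧ (supp l).card = c :=
      ⟨_, l₁, hl₁rel, fun h => hl₁i (by rw [h]; rfl), rfl⟩
    set k := Nat.find hex with hkdef
    obtain ⟨l₀, hl₀rel, hl₀ne, hl₀card⟩ := Nat.find_spec hex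
    have hmin : ∀ l : ↥𝒳 → K, ∑ i, l i • v i = 0 → l ≠ 0 → k ≤ (supp l).card := by
      intro l h1 h2
      by_contra h
      exact Nat.find_min hex (lt_of_not_ge h) ⟨l, h1, h2, rfl⟩
    have hmin' : ∀ l : ↥𝒳 → K, ∑ i, l i • v i = 0 → l ≠ 0 →
        ∃ t : Finset ↥𝒳, k ≤ t.card ∧ ∀ i ∈ t, l i ≠ 0 :=
      fun l h1 h2 => ⟨supp l, hmin l h1 h2, fun i hi => (Finset.mem_filter.1 hi).2⟩
    have hsuppmem : ∀ (l : ↥𝒳 → K) (i : ↥𝒳), i ∈ supp l ↔ l i ≠ 0 := by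
      intro l i
      simp [hsuppdef]
    have h3k : 3 ≤ k := by
      rw [hkdef, ← hl₀card]
      by_contra hlt
      push_neg at hlt
      interval_cases hc : (supp l₀).card
      · exact hl₀ne (funext fun i => by
          by_contra h0
          have : i ∈ supp l₀ := (hsuppmem l₀ i).2 (by simpa using h0)
          rw [Finset.card_eq_zero.1 hc] at this
          simp at this)
      · obtain ⟨i, hi⟩ := Finset.card_eq_one.1 hc
        have hrel2 : ∑ j ∈ supp l₀, l₀ j • v j = 0 := by
          rw [hsuppdef]
          rw [Finset.sum_filter_of_ne (fun x _ hx => by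
            intro h0
            exact hx (by rw [h0, zero_smul]))]
          exact hl₀rel
        rw [hi, Finset.sum_singleton] at hrel2
        have hii : i ∈ supp l₀ := by rw [hi]; exact Finset.mem_singleton_self i
        exact hv0 i (by
          rcases smul_eq_zero.1 hrel2 with h | h
          · exact absurd h ((hsuppmem l₀ i).1 hii)
          · exact h)
      · obtain ⟨i, j, hij, hs⟩ := Finset.card_eq_two.1 hc
        have hrel2 : ∑ j ∈ supp l₀, l₀ j • v j = 0 := by
          rw [hsuppdef]
          rw [Finset.sum_filter_of_ne (fun x _ hx => by
            intro h0
            exact hx (by rw [h0, zero_smul]))]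
          exact hl₀rel
        rw [hs, Finset.sum_pair hij] at hrel2
        have hli : l₀ i ≠ 0 := (hsuppmem l₀ i).1 (by rw [hs]; simp)
        have hlj : l₀ j ≠ 0 := (hsuppmem l₀ j).1 (by rw [hs]; simp)
        apply hij
        apply hvne i j
        rw [Submodule.mem_span_singleton]
        refine ⟨-((l₀ i)⁻¹ * l₀ j), ?_⟩
        have : l₀ i • v i = -(l₀ j • v j) := by
          rw [← add_eq_zero_iff_eq_neg]
          exact hrel2
        rw [neg_smul, mul_smul, ← smul_neg, ← this, ← mul_smul, inv_mul_cancel₀ hli, one_smul]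
    have hkm : k ≤ m := by
      rw [hkdef, ← hl₀card]
      calc (supp l₀).card ≤ Finset.univ.card := Finset.card_le_card (Finset.subset_univ _)
        _ = m := by rw [Finset.card_univ, hcardι]
    -- transport of relations
    have htrans : ∀ (σ : Equiv.Perm ↥𝒳) (l : ↥𝒳 → K), ∑ i, l i • v i = 0 →
        ∃ l' : ↥𝒳 → K, (∑ i, l' i • v i = 0) ∧ supp l' = (supp l).image σ := by
      intro σ l hl
      obtain ⟨g, u, c, hu, hgσ, hc0, hcv⟩ := key σ
      refine ⟨fun j => l (σ.symm j) * c (σ.symm j), ?_, ?_⟩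
      · have h1 : ∑ j, (l (σ.symm j) * c (σ.symm j)) • v j
            = ∑ i, (l i * c i) • v (σ i) := by
          rw [← Equiv.sum_comp σ (fun j => (l (σ.symm j) * c (σ.symm j)) • v j)]
          simp
        rw [h1]
        have h2 : ∀ i, (l i * c i) • v (σ i) = l i • u (v i) := by
          intro i
          rw [hcv i, smul_smul]
        rw [Finset.sum_congr rfl fun i _ => h2 i]
        have h3 : ∑ i, l i • u (v i) = u (∑ i, l i • v i) := by
          rw [map_sum]
          exact Finset.sum_congr rfl fun i _ => (map_smul u (l i) (v i)).symm
        rw [h3, hl, map_zero]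
      · ext j
        rw [hsuppmem]
        constructor
        · intro hj
          refine Finset.mem_image.2 ⟨σ.symm j, ?_, by simp⟩
          rw [hsuppmem]
          intro h0
          rw [h0, zero_mul] at hj
          exact hj rfl
        · rintro hj h0
          obtain ⟨i, hi, rfl⟩ := Finset.mem_image.1 hj
          rw [Equiv.symm_apply_apply] at h0
          rcases mul_eq_zero.1 h0 with h | h
          · exact (hsuppmem l i).1 hi h
          · exact hc0 i h
    -- expansion of a vector in terms of the others along a minimal relation
    have hexpand : ∀ (l : ↥𝒳 → K) (j : ↥𝒳) (t : Finset ↥𝒳), (∑ i, l i • v i = 0) → j ∉ t →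
        supp l ⊆ insert j t → l j ≠ 0 →
        v j = ∑ i : ↥t, (-(l j)⁻¹ * l i.1) • v i.1 := by
      intro l j t hrel hjt hsub hlj
      have h1 : ∑ i ∈ insert j t, l i • v i = 0 := by
        rw [Finset.sum_subset (Finset.subset_univ _) (fun x _ hx => ?_)]
        · exact hrel
        · have h0 : l x = 0 := by
            by_contra h0
            exact hx (hsub ((hsuppmem l x).2 h0))
          rw [h0, zero_smul]
      rw [Finset.sum_insert hjt] at h1
      have h2 : v j = (-(l j)⁻¹) • ∑ i ∈ t, l i • v i := by
        have h3 : l j • v j = -∑ i ∈ t, l i • v i := eq_neg_of_add_eq_zero_left h1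
        calc v j = (l j)⁻¹ • (l j • v j) := by
              rw [smul_smul, inv_mul_cancel₀ hlj, one_smul]
          _ = (l j)⁻¹ • (-∑ i ∈ t, l i • v i) := by rw [h3]
          _ = (-(l j)⁻¹) • ∑ i ∈ t, l i • v i := by rw [smul_neg, neg_smul]
      rw [h2, Finset.smul_sum,
        ← Finset.sum_coe_sort t (fun i => (-(l j)⁻¹) • (l i • v i))]
      exact Finset.sum_congr rfl fun i _ => by rw [smul_smul]
    by_cases hkem : k = m
    · -- simplex case
      have hsupp_univ : supp l₀ = Finset.univ := by
        apply Finset.eq_univ_of_card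
        rw [hl₀card, ← hkdef, hkem, hcardι]
      have hall : ∀ i, l₀ i ≠ 0 := fun i => (hsuppmem l₀ i).1 (hsupp_univ ▸ Finset.mem_univ i)
      obtain ⟨i₀⟩ := (inferInstance : Nonempty ↥𝒳)
      set s₀ : Finset ↥𝒳 := Finset.univ.erase i₀ with hs₀def
      have hi₀s : i₀ ∉ s₀ := Finset.notMem_erase i₀ _
      have hs₀card : s₀.card = m - 1 := by
        rw [hs₀def, Finset.card_erase_of_mem (Finset.mem_univ _), Finset.card_univ, hcardι]
      have hm3 : 3 ≤ m := hkem ▸ h3k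
      have hs₀ne : s₀.Nonempty := Finset.card_pos.1 (by rw [hs₀card]; omega)
      have hindep₀ : LinearIndependent K (fun i : ↥s₀ => v i.1) :=
        S19.indep_of_small v k hmin' (fun i : ↥s₀ => i.1) Subtype.val_injective
          (by rw [Fintype.card_coe, hs₀card]; omega)
      set d : ↥s₀ → K := fun i => -(l₀ i₀)⁻¹ * l₀ i.1 with hddef
      have hd0 : ∀ i, d i ≠ 0 :=
        fun i => mul_ne_zero (neg_ne_zero.2 (inv_ne_zero (hall i₀))) (hall i.1)
      have hsum : v i₀ = ∑ i : ↥s₀, d i • v i.1 :=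
        hexpand l₀ i₀ s₀ hl₀rel hi₀s
          (by rw [hs₀def, Finset.insert_erase (Finset.mem_univ i₀)]; exact Finset.subset_univ _)
          (hall i₀)
      have hsp : (⊤ : Submodule K V) ≤ span K (Set.range fun i : ↥s₀ => v i.1) := by
        rw [← hspan]
        apply span_le.2
        rintro _ ⟨i, rfl⟩
        by_cases hi : i = i₀
        · rw [hi, hsum]
          apply Submodule.sum_mem
          intro j _
          exact Submodule.smul_mem _ _ (subset_span (Set.mem_range_self _))
        · have hmem₀ : i ∈ s₀ := by
            rw [hs₀def]
            exact Finset.mem_erase.2 ⟨hi, Finset.mem_univ _⟩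
          exact subset_span (Set.mem_range_self (⟨i, hmem₀⟩ : ↥s₀))
      have hnm : n = m - 1 := by
        have hb : Module.Basis ↥s₀ K V := Module.Basis.mk hindep₀ hsp
        rw [← hn, Module.finrank_eq_card_basis hb, Fintype.card_coe, hs₀card]
      have hframe : ∃ (s₀ : Finset ↥𝒳) (i₀ : ↥𝒳) (d : ↥s₀ → K), i₀ ∉ s₀ ∧ s₀.Nonempty ∧
          LinearIndependent K (fun i : ↥s₀ => v i.1) ∧
          (⊤ : Submodule K V) ≤ span K (Set.range (fun i : ↥s₀ => v i.1)) ∧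
          (∀ i, d i ≠ 0) ∧ v i₀ = ∑ i : ↥s₀, d i • v i.1 :=
        ⟨s₀, i₀, d, hi₀s, hs₀ne, hindep₀, hsp, hd0, hsum⟩
      refine ⟨Or.inr (Or.inl ?_), fun _ => part2of hframe⟩
      refine ⟨hfin.image _, ?_, ?_, ?_, ?_⟩
      · rw [Set.ncard_image_of_injective _ Subtype.val_injective, hcard]
        omega
      · rintro P ⟨Q, hQ, rfl⟩
        exact Q.2
      · rintro ⟨x, hx, hli⟩
        haveI : Fintype ↥(Subtype.val '' 𝒳) := (hfin.image _).fintype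
        have hc1 : Fintype.card ↥(Subtype.val '' 𝒳) ≤ n := by
          have := hli.fintype_card_le_finrank
          rwa [hn] at this
        have hc2 : Fintype.card ↥(Subtype.val '' 𝒳) = m := by
          rw [← Nat.card_eq_fintype_card, Nat.card_coe_set_eq,
            Set.ncard_image_of_injective _ Subtype.val_injective, hcard]
        omega
      · intro 𝒴 h𝒴 h𝒴card
        haveI : Fintype ↥𝒴 := ((hfin.image _).subset h𝒴).fintype
        have h𝒴c : Fintype.card ↥𝒴 = n := by
          rw [← Nat.card_eq_fintype_card, Nat.card_coe_set_eq, h𝒴card]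
        have hi : ∀ Q : ↥𝒴, ∃ i : ↥𝒳, i.1.1 = Q.1 := by
          rintro ⟨Q, hQ⟩
          obtain ⟨P, hP, hPQ⟩ := h𝒴 hQ
          exact ⟨⟨P, hP⟩, hPQ⟩
        choose jof hjof using hi
        have hjinj : Function.Injective jof :=
          fun Q Q' h => Subtype.ext (by rw [← hjof Q, ← hjof Q', h])
        refine ⟨fun Q => v (jof Q), fun Q => ⟨?_, hv0 _⟩, ?_⟩
        · rw [← hjof Q]
          exact hv (jof Q)
        · exact S19.indep_of_small v k hmin' jof hjinj (by rw [h𝒴c, hkem]; omega)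
    · -- harmonic case
      have hklt : k < m := lt_of_le_of_ne hkm hkem
      set s : Finset ↥𝒳 := supp l₀ with hsdef
      have hscard : s.card = k := by rw [hsdef, hl₀card, hkdef]
      have hsne : s.Nonempty := Finset.card_pos.1 (by rw [hscard]; omega)
      obtain ⟨i₀, hi₀s⟩ := hsne
      set s₀ : Finset ↥𝒳 := s.erase i₀ with hs₀def
      have hi₀s₀ : i₀ ∉ s₀ := Finset.notMem_erase _ _
      have hs₀sub : s₀ ⊆ s := Finset.erase_subset _ _
      have hs₀card : s₀.card = k - 1 := by rw [hs₀def, Finset.card_erase_of_mem hi₀s, hscard]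
      have hs₀ne : s₀.Nonempty := Finset.card_pos.1 (by rw [hs₀card]; omega)
      haveI : Nonempty ↥s₀ := Finset.nonempty_coe_sort.2 hs₀ne
      have hl₀i₀ : l₀ i₀ ≠ 0 := (hsuppmem l₀ i₀).1 hi₀s
      have hins : insert i₀ s₀ = s := by rw [hs₀def, Finset.insert_erase hi₀s]
      -- every k-subset supports a relation
      have hallk : ∀ t : Finset ↥𝒳, t.card = k →
          ∃ l : ↥𝒳 → K, (∑ i, l i • v i = 0) ∧ supp l = t := by
        intro t ht
        obtain ⟨σ, hσ⟩ := S19.perm_extend (s := s) (t := t) (by rw [hscard, ht])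
        obtain ⟨l', hl'rel, hl'supp⟩ := htrans σ l₀ hl₀rel
        refine ⟨l', hl'rel, ?_⟩
        rw [hl'supp, ← hsdef]
        apply Finset.eq_of_subset_of_card_le
        · intro j hj
          obtain ⟨i, hi, rfl⟩ := Finset.mem_image.1 hj
          exact (hσ i).1 hi
        · rw [ht, ← hscard]
          exact le_of_eq (Finset.card_image_of_injective _ σ.injective).symm
      -- the basis from s₀
      have hindep₀ : LinearIndependent K (fun i : ↥s₀ => v i.1) :=
        S19.indep_of_small v k hmin' (fun i : ↥s₀ => i.1) Subtype.val_injective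
          (by rw [Fintype.card_coe, hs₀card]; omega)
      set d : ↥s₀ → K := fun i => -(l₀ i₀)⁻¹ * l₀ i.1 with hddef
      have hd0 : ∀ i, d i ≠ 0 :=
        fun i => mul_ne_zero (neg_ne_zero.2 (inv_ne_zero hl₀i₀))
          ((hsuppmem l₀ i.1).1 (hs₀sub i.2))
      have hsum₀ : v i₀ = ∑ i : ↥s₀, d i • v i.1 :=
        hexpand l₀ i₀ s₀ hl₀rel hi₀s₀ (by rw [hins, ← hsdef]) hl₀i₀
      have hsp : (⊤ : Submodule K V) ≤ span K (Set.range fun i : ↥s₀ => v i.1) := by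
        rw [← hspan]
        apply span_le.2
        rintro _ ⟨j, rfl⟩
        by_cases hj : j ∈ s₀
        · exact subset_span (Set.mem_range_self (⟨j, hj⟩ : ↥s₀))
        by_cases hj' : j = i₀
        · rw [hj', hsum₀]
          apply Submodule.sum_mem
          intro i _
          exact Submodule.smul_mem _ _ (subset_span (Set.mem_range_self _))
        · have hjs : j ∉ s := by
            intro h
            exact hj (by rw [hs₀def]; exact Finset.mem_erase.2 ⟨hj', h⟩)
          obtain ⟨l, hlrel, hlsupp⟩ := hallk (insert j s₀)
            (by rw [Finset.card_insert_of_notMem hj, hs₀card]; omega)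
          have hlj : l j ≠ 0 :=
            (hsuppmem _ _).1 (by rw [hlsupp]; exact Finset.mem_insert_self _ _)
          rw [hexpand l j s₀ hlrel hj (by rw [hlsupp]) hlj]
          apply Submodule.sum_mem
          intro i _
          exact Submodule.smul_mem _ _ (subset_span (Set.mem_range_self _))
      have hnk : n = k - 1 := by
        have hb : Module.Basis ↥s₀ K V := Module.Basis.mk hindep₀ hsp
        rw [← hn, Module.finrank_eq_card_basis hb, Fintype.card_coe, hs₀card]
      -- there is exactly one point outside s
      obtain ⟨q, hqs⟩ : ∃ q, q ∉ s := by
        by_contra h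
        push_neg at h
        have h1 : (Finset.univ : Finset ↥𝒳) ⊆ s := fun i _ => h i
        have h2 := Finset.card_le_card h1
        rw [Finset.card_univ, hcardι, hscard] at h2
        omega
      have huniq : ∀ j, j ∉ s → j = q := by
        intro j hjs
        by_contra hjq
        obtain ⟨g, u, c, hu, hgσ, hc0, hcv⟩ := key (Equiv.swap q j)
        have hfixs : ∀ i : ↥𝒳, i ∈ s → Equiv.swap q j i = i := fun i hi =>
          Equiv.swap_apply_of_ne_of_ne (fun h => hqs (h ▸ hi)) (fun h => hjs (h ▸ hi))
        let hbv : Module.Basis ↥s₀ K V := Module.Basis.mk hindep₀ hsp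
        have hbvi : ∀ i : ↥s₀, hbv i = v i.1 := fun i => Module.Basis.mk_apply hindep₀ hsp i
        have hbeq : ∑ i : ↥s₀, d i • hbv i = v i₀ := by
          rw [hsum₀]
          exact Finset.sum_congr rfl fun i _ => by rw [hbvi]
        have hfix := S19.frame_fix hbv u (fun i => ⟨c i.1, by
            rw [hbvi, hcv i.1, hfixs i.1 (hs₀sub i.2)]⟩) d hd0
          ⟨c i₀, by rw [hbeq, hcv i₀, hfixs i₀ hi₀s]⟩
        have hgid : ∀ P : ProjLine K V, (g : Equiv.Perm (ProjLine K V)) P = P := by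
          intro P
          apply Subtype.ext
          rw [hu P, hfix]
        have hσq : (Equiv.swap q j q).1 = q.1 := by
          rw [← hgσ q, hgid]
        exact hjq (Subtype.ext (by rw [← hσq, Equiv.swap_apply_left]))
      have hqs₀ : q ∉ s₀ := fun h => hqs (hs₀sub h)
      have hi₀q : i₀ ≠ q := fun h => hqs (h ▸ hi₀s)
      have hmk : m = k + 1 := by
        have huniv : (Finset.univ : Finset ↥𝒳) ⊆ insert q s := by
          intro i _
          by_cases h : i ∈ s
          · exact Finset.mem_insert_of_mem h
          · rw [huniq i h]
            exact Finset.mem_insert_self _ _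
        have h1 := Finset.card_le_card huniv
        rw [Finset.card_univ, hcardι, Finset.card_insert_of_notMem hqs, hscard] at h1
        omega
      -- coordinates of v q
      obtain ⟨lq, hlqrel, hlqsupp⟩ := hallk (insert q s₀)
        (by rw [Finset.card_insert_of_notMem hqs₀, hs₀card]; omega)
      have hlqq : lq q ≠ 0 :=
        (hsuppmem _ _).1 (by rw [hlqsupp]; exact Finset.mem_insert_self _ _)
      set e' : ↥s₀ → K := fun i => -(lq q)⁻¹ * lq i.1 with he'def
      have he0 : ∀ i, e' i ≠ 0 := fun i => mul_ne_zero (neg_ne_zero.2 (inv_ne_zero hlqq))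
        ((hsuppmem lq i.1).1 (by rw [hlqsupp]; exact Finset.mem_insert_of_mem i.2))
      have hsumq : v q = ∑ i : ↥s₀, e' i • v i.1 :=
        hexpand lq q s₀ hlqrel hqs₀ (by rw [hlqsupp]) hlqq
      -- cross products are distinct
      have hcross : ∀ a b : ↥s₀, a ≠ b → e' a * d b ≠ e' b * d a := by
        intro a b hab hEq
        set L : ↥𝒳 → K := fun j => if j = i₀ then e' a else if j = q then -(d a) else
          if h : j ∈ s₀ then -(e' a * d ⟨j, h⟩ - d a * e' ⟨j, h⟩) else 0 with hLdef
        have hLi₀ : L i₀ = e' a := by rw [hLdef]; simp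
        have hLq : L q = -(d a) := by
          rw [hLdef]
          simp [hi₀q.symm]
        have hLs₀ : ∀ i : ↥s₀, L i.1 = -(e' a * d i - d a * e' i) := by
          intro i
          have h1 : i.1 ≠ i₀ := fun h => hi₀s₀ (h ▸ i.2)
          have h2 : i.1 ≠ q := fun h => hqs₀ (h ▸ i.2)
          rw [hLdef]
          simp only [h1, h2, if_false, i.2, dif_pos]
        have hLrel : ∑ i, L i • v i = 0 := by
          have h1 : ∑ i ∈ insert i₀ (insert q s₀), L i • v i = 0 := by
            have h2 : ∑ i ∈ insert i₀ (insert q s₀), L i • v i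
                = L i₀ • v i₀ + (L q • v q + ∑ i ∈ s₀, L i • v i) := by
              rw [Finset.sum_insert (by
                  simp only [Finset.mem_insert]
                  push_neg
                  exact ⟨hi₀q, hi₀s₀⟩),
                Finset.sum_insert hqs₀]
            rw [h2, hLi₀, hLq]
            have h3 : ∑ i ∈ s₀, L i • v i = ∑ i : ↥s₀, (-(e' a * d i - d a * e' i)) • v i.1 := by
              rw [← Finset.sum_coe_sort s₀ (fun i => L i • v i)]
              exact Finset.sum_congr rfl fun i _ => by rw [hLs₀ i]
            rw [h3, hsum₀, hsumq]
            rw [Finset.smul_sum, Finset.smul_sum, ← Finset.sum_add_distrib,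
              ← Finset.sum_add_distrib]
            apply Finset.sum_eq_zero
            intro i _
            module
          rw [← h1]
          symm
          apply Finset.sum_subset (Finset.subset_univ _)
          intro x _ hx
          have hxi₀ : x ≠ i₀ := fun h => hx (by rw [h]; exact Finset.mem_insert_self _ _)
          have hxq : x ≠ q := fun h => hx (by
            rw [h]; exact Finset.mem_insert_of_mem (Finset.mem_insert_self _ _))
          have hxs₀ : x ∉ s₀ := fun h =>
            hx (Finset.mem_insert_of_mem (Finset.mem_insert_of_mem h))
          have h0 : L x = 0 := by
            rw [hLdef]
            simp only [if_neg hxi₀, if_neg hxq, dif_neg hxs₀]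
          rw [h0, zero_smul]
        have hLne : L ≠ 0 := fun h => he0 a (by rw [← hLi₀, h]; rfl)
        have hLsub : supp L ⊆ ((insert i₀ (insert q s₀)).erase a.1).erase b.1 := by
          intro j hj
          have hLj : L j ≠ 0 := (hsuppmem L j).1 hj
          have hja : j ≠ a.1 := by
            intro h
            apply hLj
            rw [h, hLs₀ a]
            ring
          have hjb : j ≠ b.1 := by
            intro h
            apply hLj
            rw [h, hLs₀ b, hEq]
            ring
          refine Finset.mem_erase.2 ⟨hjb, Finset.mem_erase.2 ⟨hja, ?_⟩⟩
          by_contra hjm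
          apply hLj
          have hxi₀ : j ≠ i₀ := fun h => hjm (by rw [h]; exact Finset.mem_insert_self _ _)
          have hxq : j ≠ q := fun h => hjm (by
            rw [h]; exact Finset.mem_insert_of_mem (Finset.mem_insert_self _ _))
          have hxs₀ : j ∉ s₀ := fun h =>
            hjm (Finset.mem_insert_of_mem (Finset.mem_insert_of_mem h))
          rw [hLdef]
          simp only [if_neg hxi₀, if_neg hxq, dif_neg hxs₀]
        have hi₀ins : i₀ ∉ insert q s₀ := by
          simp only [Finset.mem_insert]
          push_neg
          exact ⟨hi₀q, hi₀s₀⟩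
        have hcardins : (insert i₀ (insert q s₀)).card = k + 1 := by
          rw [Finset.card_insert_of_notMem hi₀ins, Finset.card_insert_of_notMem hqs₀,
            hs₀card]
          omega
        have hamem : a.1 ∈ insert i₀ (insert q s₀) :=
          Finset.mem_insert_of_mem (Finset.mem_insert_of_mem a.2)
        have hbmem : b.1 ∈ (insert i₀ (insert q s₀)).erase a.1 :=
          Finset.mem_erase.2 ⟨fun h => hab (Subtype.ext h.symm),
            Finset.mem_insert_of_mem (Finset.mem_insert_of_mem b.2)⟩
        have hcard1 : (((insert i₀ (insert q s₀)).erase a.1).erase b.1).card = k - 1 := by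
          rw [Finset.card_erase_of_mem hbmem, Finset.card_erase_of_mem hamem, hcardins]
          omega
        have h5 := hmin L hLrel hLne
        have h4 := Finset.card_le_card hLsub
        rw [hcard1] at h4
        omega
      -- the swap of i₀ and q gives the quadratic relation on ratios
      obtain ⟨gq, uq, cq, huq, hgqσ, hcq0, hcqv⟩ := key (Equiv.swap i₀ q)
      have hswap : ∀ i : ↥s₀, Equiv.swap i₀ q i.1 = i.1 := fun i =>
        Equiv.swap_apply_of_ne_of_ne (fun h => hi₀s₀ (h ▸ i.2)) (fun h => hqs₀ (h ▸ i.2))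
      have hq1 : uq (v i₀) = ∑ i : ↥s₀, (d i * cq i.1) • v i.1 := by
        rw [hsum₀, map_sum]
        refine Finset.sum_congr rfl fun i _ => ?_
        rw [map_smul, hcqv i.1, hswap i, smul_smul]
      have hq2 : uq (v i₀) = ∑ i : ↥s₀, (cq i₀ * e' i) • v i.1 := by
        rw [hcqv i₀, Equiv.swap_apply_left, hsumq, Finset.smul_sum]
        exact Finset.sum_congr rfl fun i _ => by rw [smul_smul]
      have heq1 : ∀ i : ↥s₀, d i * cq i.1 = cq i₀ * e' i := by
        intro i
        have h3 : ∑ j : ↥s₀, (d j * cq j.1 - cq i₀ * e' j) • v j.1 = 0 := by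
          simp only [sub_smul, Finset.sum_sub_distrib]
          rw [← hq1, ← hq2, sub_self]
        exact sub_eq_zero.1 (Fintype.linearIndependent_iff.1 hindep₀ _ h3 i)
      have hq3 : uq (v q) = ∑ i : ↥s₀, (e' i * cq i.1) • v i.1 := by
        rw [hsumq, map_sum]
        refine Finset.sum_congr rfl fun i _ => ?_
        rw [map_smul, hcqv i.1, hswap i, smul_smul]
      have hq4 : uq (v q) = ∑ i : ↥s₀, (cq q * d i) • v i.1 := by
        rw [hcqv q, Equiv.swap_apply_right, hsum₀, Finset.smul_sum]
        exact Finset.sum_congr rfl fun i _ => by rw [smul_smul]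
      have heq2 : ∀ i : ↥s₀, e' i * cq i.1 = cq q * d i := by
        intro i
        have h3 : ∑ j : ↥s₀, (e' j * cq j.1 - cq q * d j) • v j.1 = 0 := by
          simp only [sub_smul, Finset.sum_sub_distrib]
          rw [← hq3, ← hq4, sub_self]
        exact sub_eq_zero.1 (Fintype.linearIndependent_iff.1 hindep₀ _ h3 i)
      have hsq : ∀ a : ↥s₀, cq i₀ * e' a * e' a = cq q * d a * d a := by
        intro a
        have h3 : e' a * (d a * cq a.1) = e' a * (cq i₀ * e' a) := by rw [heq1 a]
        have h4 : d a * (e' a * cq a.1) = d a * (cq q * d a) := by rw [heq2 a]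
        have h5 : e' a * (cq i₀ * e' a) = d a * (cq q * d a) := by
          rw [← h3, ← h4]
          ring
        calc cq i₀ * e' a * e' a = e' a * (cq i₀ * e' a) := by ring
          _ = d a * (cq q * d a) := h5
          _ = cq q * d a * d a := by ring
      have hpm : ∀ a b : ↥s₀, a ≠ b → e' a * d b = -(e' b * d a) := by
        intro a b hab
        have h3 : (e' a * d b) * (e' a * d b) = (e' b * d a) * (e' b * d a) := by
          apply mul_left_cancel₀ (hcq0 i₀)
          calc cq i₀ * (e' a * d b * (e' a * d b))
              = (cq i₀ * e' a * e' a) * (d b * d b) := by ring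
            _ = (cq q * d a * d a) * (d b * d b) := by rw [hsq a]
            _ = (cq q * d b * d b) * (d a * d a) := by ring
            _ = (cq i₀ * e' b * e' b) * (d a * d a) := by rw [← hsq b]
            _ = cq i₀ * (e' b * d a * (e' b * d a)) := by ring
        have h5 : (e' a * d b - e' b * d a) * (e' a * d b + e' b * d a) = 0 := by
          linear_combination h3
        rcases mul_eq_zero.1 h5 with h | h
        · exact absurd (sub_eq_zero.1 h) (hcross a b hab)
        · exact eq_neg_of_add_eq_zero_left h
      have hn2 : n = 2 := by
        by_contra hne2
        obtain ⟨a, b, c', ha, hb, hc', hab, hac, hbc⟩ := Finset.two_lt_card_iff.1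
          (show 2 < s₀.card by rw [hs₀card]; omega)
        set A : ↥s₀ := ⟨a, ha⟩
        set B : ↥s₀ := ⟨b, hb⟩
        set C : ↥s₀ := ⟨c', hc'⟩
        have hAB : A ≠ B := fun h => hab (congrArg Subtype.val h)
        have hAC : A ≠ C := fun h => hac (congrArg Subtype.val h)
        have hBC : B ≠ C := fun h => hbc (congrArg Subtype.val h)
        have h1 := hpm A B hAB
        have h2' := hpm A C hAC
        have h3 := hpm B C hBC
        have h4 : e' A * d A * (e' C * d B) = e' A * d A * (e' B * d C) := by
          linear_combination (d A * e' C) * h1 - (d A * e' B) * h2'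
        have h5 : e' C * d B = e' B * d C :=
          mul_left_cancel₀ (mul_ne_zero (he0 A) (hd0 A)) h4
        have h7 : (2 : K) * (e' C * d B) = 0 := by linear_combination h5 + h3
        have h8 : (2 : K) = 0 := by
          rcases mul_eq_zero.1 h7 with h | h
          · exact h
          · exact absurd h (mul_ne_zero (he0 C) (hd0 B))
        apply hcross A B hAB
        rw [h1]
        linear_combination (-(e' B * d A)) * h8
      have hk3 : k = 3 := by omega
      have hm4 : m = 4 := by omega
      obtain ⟨a, b, hab, hs₀ab⟩ := Finset.card_eq_two.1
        (show s₀.card = 2 by rw [hs₀card, hk3])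
      have ha : a ∈ s₀ := by rw [hs₀ab]; exact Finset.mem_insert_self _ _
      have hb : b ∈ s₀ := by rw [hs₀ab]; simp
      set A : ↥s₀ := ⟨a, ha⟩ with hAdef
      set B : ↥s₀ := ⟨b, hb⟩ with hBdef
      have hAB : A ≠ B := fun h => hab (congrArg Subtype.val h)
      set x : V := d A • v a with hxdef
      set y : V := d B • v b with hydef
      have hsum2 : ∀ f : ↥s₀ → V, ∑ i : ↥s₀, f i = f A + f B := by
        intro f
        have huniv2 : (Finset.univ : Finset ↥s₀) = {A, B} := by
          symm
          apply Finset.eq_univ_of_card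
          rw [Finset.card_pair hAB, Fintype.card_coe, hs₀card, hk3]
        rw [huniv2, Finset.sum_pair hAB]
      have hvi₀ : v i₀ = x + y := by rw [hsum₀, hsum2]
      have hr0 : e' A * (d A)⁻¹ ≠ 0 := mul_ne_zero (he0 A) (inv_ne_zero (hd0 A))
      have hEb : e' B = -(e' A * (d A)⁻¹ * d B) := by
        have h1 := hpm A B hAB
        apply mul_right_cancel₀ (hd0 A)
        have h2 : -(e' A * (d A)⁻¹ * d B) * d A = -(e' A * d B) := by
          have h2' : e' A * (d A)⁻¹ * d B * d A = e' A * d B * ((d A)⁻¹ * d A) := by ring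
          rw [neg_mul, h2', inv_mul_cancel₀ (hd0 A), mul_one]
        rw [h2]
        linear_combination h1
      have hvq : v q = (e' A * (d A)⁻¹) • (x - y) := by
        rw [hsumq, hsum2, hEb, hxdef, hydef, smul_sub, smul_smul, smul_smul]
        have h1 : e' A * (d A)⁻¹ * d A = e' A := by
          rw [mul_assoc, inv_mul_cancel₀ (hd0 A), mul_one]
        rw [h1, neg_smul, sub_eq_add_neg]
      have hLa : span K {x} = ((a : ↥𝒳).1 : Submodule K V) := by
        rw [hxdef, Submodule.span_singleton_smul_eq (hd0 A).isUnit, hvspan a]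
      have hLb : span K {y} = ((b : ↥𝒳).1 : Submodule K V) := by
        rw [hydef, Submodule.span_singleton_smul_eq (hd0 B).isUnit, hvspan b]
      have hLi₀ : span K {x + y} = (i₀.1 : Submodule K V) := by
        rw [← hvi₀, hvspan i₀]
      have hLq : span K {x - y} = (q.1 : Submodule K V) := by
        rw [← hvspan q, hvq, Submodule.span_singleton_smul_eq hr0.isUnit]
      have hxy : LinearIndependent K ![x, y] := by
        rw [LinearIndependent.pair_iff]
        intro s' t hst
        have h1 : ∑ i : ↥s₀, (if i = A then s' * d A else t * d B) • v i.1 = 0 := by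
          rw [hsum2]
          rw [if_pos rfl, if_neg (fun h => hAB h.symm)]
          calc (s' * d A) • v a + (t * d B) • v b = s' • x + t • y := by
                rw [hxdef, hydef, smul_smul, smul_smul]
            _ = 0 := hst
        have h2 := Fintype.linearIndependent_iff.1 hindep₀ _ h1
        have hA2 := h2 A
        have hB2 := h2 B
        rw [if_pos rfl] at hA2
        rw [if_neg (fun h => hAB h.symm)] at hB2
        constructor
        · rcases mul_eq_zero.1 hA2 with h | h
          · exact h
          · exact absurd h (hd0 A)
        · rcases mul_eq_zero.1 hB2 with h | h
          · exact h
          · exact absurd h (hd0 B)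
      have hqa : q ≠ a := fun h => hqs₀ (h ▸ ha)
      have hqb : q ≠ b := fun h => hqs₀ (h ▸ hb)
      have hi₀a : i₀ ≠ a := fun h => hi₀s₀ (h ▸ ha)
      have hi₀b : i₀ ≠ b := fun h => hi₀s₀ (h ▸ hb)
      have huniv4 : (Finset.univ : Finset ↥𝒳) = {a, b, i₀, q} := by
        symm
        apply Finset.eq_univ_of_card
        rw [hcardι, hm4]
        rw [Finset.card_insert_of_notMem (by
            simp only [Finset.mem_insert, Finset.mem_singleton]
            push_neg
            exact ⟨hab, fun h => hi₀a h.symm, fun h => hqa h.symm⟩),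
          Finset.card_insert_of_notMem (by
            simp only [Finset.mem_insert, Finset.mem_singleton]
            push_neg
            exact ⟨fun h => hi₀b h.symm, fun h => hqb h.symm⟩),
          Finset.card_insert_of_notMem (by
            simp only [Finset.mem_singleton]
            exact hi₀q),
          Finset.card_singleton]
      have hXeq : Subtype.val '' 𝒳
          = {span K {x}, span K {y}, span K {x + y}, span K {x - y}} := by
        ext Q
        simp only [Set.mem_image, Set.mem_insert_iff, Set.mem_singleton_iff]
        constructor
        · rintro ⟨P, hP, rfl⟩
          have hPm : (⟨P, hP⟩ : ↥𝒳) ∈ ({a, b, i₀, q} : Finset ↥𝒳) := by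
            rw [← huniv4]
            exact Finset.mem_univ _
          simp only [Finset.mem_insert, Finset.mem_singleton] at hPm
          rcases hPm with h | h | h | h
          · left
            have hPv : (P : Submodule K V) = ((a : ↥𝒳).1 : Submodule K V) :=
              congrArg (fun z : ↥𝒳 => (z.1 : Submodule K V)) h
            rw [hPv]
            exact hLa.symm
          · right; left
            have hPv : (P : Submodule K V) = ((b : ↥𝒳).1 : Submodule K V) :=
              congrArg (fun z : ↥𝒳 => (z.1 : Submodule K V)) h
            rw [hPv]
            exact hLb.symm
          · right; right; left
            have hPv : (P : Submodule K V) = (i₀.1 : Submodule K V) :=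
              congrArg (fun z : ↥𝒳 => (z.1 : Submodule K V)) h
            rw [hPv]
            exact hLi₀.symm
          · right; right; right
            have hPv : (P : Submodule K V) = (q.1 : Submodule K V) :=
              congrArg (fun z : ↥𝒳 => (z.1 : Submodule K V)) h
            rw [hPv]
            exact hLq.symm
        · intro hQ
          rcases hQ with h | h | h | h
          · exact ⟨a.1, a.2, by rw [h]; exact hLa.symm⟩
          · exact ⟨b.1, b.2, by rw [h]; exact hLb.symm⟩
          · exact ⟨i₀.1, i₀.2, by rw [h]; exact hLi₀.symm⟩
          · exact ⟨q.1, q.2, by rw [h]; exact hLq.symm⟩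
      have h3K : (3 : K) = 0 := by
        set τ : Equiv.Perm ↥𝒳 := Equiv.swap a i₀ * Equiv.swap a b with hτdef
        obtain ⟨g3, u3, c3, hu3, hg3, hc30, hc3v⟩ := key τ
        have hτa : τ a = b := by
          rw [hτdef, Equiv.Perm.mul_apply, Equiv.swap_apply_left,
            Equiv.swap_apply_of_ne_of_ne hab.symm (Ne.symm hi₀b)]
        have hτb : τ b = i₀ := by
          rw [hτdef, Equiv.Perm.mul_apply, Equiv.swap_apply_right, Equiv.swap_apply_left]
        have hτi₀ : τ i₀ = a := by
          rw [hτdef, Equiv.Perm.mul_apply,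
            Equiv.swap_apply_of_ne_of_ne hi₀a hi₀b, Equiv.swap_apply_right]
        have hτq : τ q = q := by
          rw [hτdef, Equiv.Perm.mul_apply,
            Equiv.swap_apply_of_ne_of_ne hqa hqb,
            Equiv.swap_apply_of_ne_of_ne hqa hi₀q.symm]
        set α := d A * c3 a * (d B)⁻¹ with hα
        set β := d B * c3 b with hβ
        set γ := c3 i₀ * (d A)⁻¹ with hγ
        have hux : u3 x = α • y := by
          rw [hxdef, map_smul, hc3v a, hτa, hydef, smul_smul, smul_smul]
          congr 1
          rw [hα]
          exact (inv_mul_cancel_right₀ (hd0 B) _).symm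
        have huy : u3 y = β • (x + y) := by
          rw [hydef, map_smul, hc3v b, hτb, ← hvi₀, smul_smul]
        have huxy : u3 (x + y) = γ • x := by
          rw [← hvi₀, hc3v i₀, hτi₀, hxdef, smul_smul]
          congr 1
          rw [hγ]
          exact (inv_mul_cancel_right₀ (hd0 A) _).symm
        have I1 : (β - γ) • x + (α + β) • y = 0 := by
          have h1 : α • y + β • (x + y) = γ • x := by
            rw [← hux, ← huy, ← map_add, huxy]
          have h2 : (β - γ) • x + (α + β) • y = (α • y + β • (x + y)) - γ • x := by
            module
          rw [h2, h1, sub_self]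
        obtain ⟨hc1, hc2⟩ := LinearIndependent.pair_iff.1 hxy _ _ I1
        have huxmy : u3 (x - y) = (-β) • x + (α - β) • y := by
          rw [map_sub, hux, huy]
          module
        have hqline : u3 (x - y) = c3 q • x - c3 q • y := by
          have h1 : x - y = (e' A * (d A)⁻¹)⁻¹ • v q := by
            rw [hvq, smul_smul, inv_mul_cancel₀ hr0, one_smul]
          rw [h1, map_smul, hc3v q, hτq, hvq, smul_smul, smul_smul]
          have h2 : (e' A * (d A)⁻¹)⁻¹ * c3 q * (e' A * (d A)⁻¹) = c3 q := by
            have h3 : (e' A * (d A)⁻¹)⁻¹ * c3 q * (e' A * (d A)⁻¹)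
                = c3 q * ((e' A * (d A)⁻¹)⁻¹ * (e' A * (d A)⁻¹)) := by ring
            rw [h3, inv_mul_cancel₀ hr0, mul_one]
          rw [h2, smul_sub]
        have I2 : (-β - c3 q) • x + (α - β + c3 q) • y = 0 := by
          have h2 : (-β - c3 q) • x + (α - β + c3 q) • y
              = ((-β) • x + (α - β) • y) - (c3 q • x - c3 q • y) := by
            module
          rw [h2, ← huxmy, hqline, sub_self]
        obtain ⟨hc3', hc4⟩ := LinearIndependent.pair_iff.1 hxy _ _ I2
        have hβ0 : β ≠ 0 := mul_ne_zero (hd0 B) (hc30 b)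
        have h3β : (3 : K) * β = 0 := by linear_combination hc2 - hc4 - hc3'
        rcases mul_eq_zero.1 h3β with h | h
        · exact h
        · exact absurd h hβ0
      have hring : ringChar K = 3 := by
        have h1 : ringChar K ∣ 3 := by
          apply (ringChar.spec K 3).1
          exact_mod_cast h3K
        rcases Nat.Prime.eq_one_or_self_of_dvd (by norm_num) _ h1 with h | h
        · exfalso
          have h2 := (ringChar.spec K 1).2 (h ▸ dvd_refl _)
          simp at h2
        · exact h
      exact ⟨Or.inr (Or.inr ⟨hring, x, y, hxy, hXeq⟩),
        fun _ => part2of ⟨s₀, i₀, d, hi₀s₀, hs₀ne, hindep₀, hsp, hd0, hsum₀⟩⟩
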